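/- The square of every base-b palindrome with at least two digits is a b-wMRH number. -/

import Mathlib

/-- Sum of the base-`b` digits of `N`. -/
def sumDigits (b N : ℕ) : ℕ := (Nat.digits b N).sum

/-- The base-`b` reversal of `N`. -/
def revDigits (b N : ℕ) : ℕ := Nat.ofDigits b (Nat.digits b N).reverse

/-- `N` is a `b`-wMRH number. -/
def IsWMRH (b N : ℕ) : Prop :=
  ∃ A : ℕ, N = (A + sumDigits b N) * revDigits b (A + sumDigits b N)

lemma sumDigits_step {b : ℕ} (hb : 1 < b) {N : ℕ} (hN : 0 < N) :
    sumDigits b N = N % b + sumDigits b (N / b) := by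
  unfold sumDigits
  rw [Nat.digits_def' hb hN, List.sum_cons]

lemma sumDigits_zero (b : ℕ) : sumDigits b 0 = 0 := by simp [sumDigits]

lemma sumDigits_lt_base {b N : ℕ} (hb : 1 < b) (h : N < b) : sumDigits b N = N := by
  rcases Nat.eq_zero_or_pos N with h0 | h0
  · simp [h0, sumDigits_zero]
  · rw [sumDigits_step hb h0, Nat.mod_eq_of_lt h, Nat.div_eq_of_lt h, sumDigits_zero]
    omega

lemma sumDigits_mul_add {b x : ℕ} (hb : 1 < b) (hx : x < b) (y : ℕ) :
    sumDigits b (b * y + x) = x + sumDigits b y := by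
  rcases Nat.eq_zero_or_pos (b * y + x) with h0 | h0
  · have hy : y = 0 := by
      rcases Nat.eq_zero_or_pos y with h | h
      · exact h
      · exfalso; nlinarith
    have hx0 : x = 0 := by omega
    simp [hy, hx0, sumDigits_zero]
  · rw [sumDigits_step hb h0]
    have h1 : (b * y + x) % b = x := by
      rw [Nat.mul_add_mod, Nat.mod_eq_of_lt hx]
    have h2 : (b * y + x) / b = y := by
      rw [Nat.mul_add_div (by omega : 0 < b), Nat.div_eq_of_lt hx]
      omega
    rw [h1, h2]

lemma sumDigits_le_self {b : ℕ} (hb : 1 < b) : ∀ N, sumDigits b N ≤ N := by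
  intro N
  induction N using Nat.strong_induction_on with
  | _ N ih =>
    rcases Nat.eq_zero_or_pos N with h | h
    · simp [h, sumDigits_zero]
    · rw [sumDigits_step hb h]
      have h1 : N / b < N := Nat.div_lt_self h hb
      have h2 := ih (N / b) h1
      have h3 : b * (N / b) + N % b = N := Nat.div_add_mod N b
      have h4 : N / b ≤ b * (N / b) := Nat.le_mul_of_pos_left _ (by omega)
      omega

lemma sumDigits_le_div_pow {b : ℕ} (hb : 1 < b) :
    ∀ (k N : ℕ), sumDigits b N ≤ N / b ^ k + k * (b - 1) := by
  intro k
  induction k with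
  | zero => intro N; simpa using sumDigits_le_self hb N
  | succ k ih =>
    intro N
    rcases Nat.eq_zero_or_pos N with h | h
    · simp [h, sumDigits_zero]
    · rw [sumDigits_step hb h]
      have h1 := ih (N / b)
      have h2 : N / b / b ^ k = N / b ^ (k + 1) := by
        rw [Nat.div_div_eq_div_mul, ← pow_succ']
      rw [h2] at h1
      have h3 : N % b ≤ b - 1 := by
        have := Nat.mod_lt N (show 0 < b by omega); omega
      have h4 : (k + 1) * (b - 1) = k * (b - 1) + (b - 1) := by ring
      omega

/-- Generic case: if `P` is large compared to its number of digits. -/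
lemma sumDigits_sq_le_of_big {b P : ℕ} (hb : 2 ≤ b)
    (h : b * ((Nat.digits b P).length + 1) ≤ P) :
    sumDigits b (P ^ 2) ≤ P := by
  set d := (Nat.digits b P).length with hd
  have hb1 : 1 < b := hb
  have hPlt : P < b ^ d := Nat.lt_base_pow_length_digits hb1
  have key := sumDigits_le_div_pow hb1 (d + 1) (P ^ 2)
  have h1 : P ^ 2 ≤ P * b ^ d := by nlinarith
  have h2 : P ^ 2 / b ^ d ≤ P := by
    calc P ^ 2 / b ^ d ≤ P * b ^ d / b ^ d := Nat.div_le_div_right h1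
    _ = P := Nat.mul_div_cancel P (pow_pos (by omega) d)
  have h3 : P ^ 2 / b ^ (d + 1) ≤ P / b := by
    have heq : P ^ 2 / b ^ (d + 1) = P ^ 2 / b ^ d / b := by
      rw [Nat.div_div_eq_div_mul, ← pow_succ]
    rw [heq]
    exact Nat.div_le_div_right h2
  have hq : d + 1 ≤ P / b := (Nat.le_div_iff_mul_le (by omega)).mpr (by linarith [h])
  have hqb : P / b * b ≤ P := Nat.div_mul_le_self P b
  have h7 : P / b + (d + 1) * (b - 1) ≤ P := by
    have h5 : (d + 1) * (b - 1) ≤ P / b * (b - 1) := Nat.mul_le_mul_right _ hq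
    have h6 : P / b + P / b * (b - 1) = P / b * b := by
      have hb' : b - 1 + 1 = b := by omega
      calc P / b + P / b * (b - 1) = P / b * (b - 1 + 1) := by ring
      _ = P / b * b := by rw [hb']
    omega
  omega

/-- `2 ^ (m + 3) ≥ m + 6` -/
lemma aux_pow (m : ℕ) : m + 6 ≤ 2 ^ (m + 3) := by
  induction m with
  | zero => norm_num
  | succ k ih =>
    have : 2 ^ (k + 3) * 2 = 2 ^ (k + 1 + 3) := by ring
    omega

theorem palindrome_sq_isWMRH (b P : ℕ) (hb : 2 ≤ b) (hP : b ≤ P)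
    (hpal : (Nat.digits b P).Palindrome) :
    IsWMRH b (P ^ 2) := by
  have hb1 : 1 < b := hb
  have hP0 : 0 < P := by omega
  -- Step 1: the digit-sum inequality
  have hs : sumDigits b (P ^ 2) ≤ P := by
    by_cases hgen : b * ((Nat.digits b P).length + 1) ≤ P
    · exact sumDigits_sq_le_of_big hb hgen
    push_neg at hgen
    obtain ⟨d, hd⟩ : ∃ d, (Nat.digits b P).length = d := ⟨_, rfl⟩
    rw [hd] at hgen
    have hlen : d = Nat.log b P + 1 := by rw [← hd]; exact Nat.digits_len b P hb1 (by omega)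
    have hlog : 1 ≤ Nat.log b P := Nat.log_pos hb1 hP
    have hd2 : 2 ≤ d := by omega
    have hPow : b ^ (d - 1) ≤ P := by
      have := Nat.pow_log_le_self b (show P ≠ 0 by omega)
      have heq : d - 1 = Nat.log b P := by omega
      rw [heq]; exact this
    have hsmall : b ^ (d - 2) < d + 1 := by
      by_contra hcon
      push_neg at hcon
      have heq : b ^ (d - 1) = b ^ (d - 2) * b := by
        rw [← pow_succ]; congr 1; omega
      have hge : b * (d + 1) ≤ b ^ (d - 1) := by
        rw [heq]
        calc b * (d + 1) ≤ b * b ^ (d - 2) := Nat.mul_le_mul_left b hcon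
        _ = b ^ (d - 2) * b := by ring
      omega
    have hd4 : d ≤ 4 := by
      by_contra hcon
      push_neg at hcon
      obtain ⟨m, hm⟩ : ∃ m, d = m + 5 := ⟨d - 5, by omega⟩
      have h2b : 2 ^ (d - 2) ≤ b ^ (d - 2) := Nat.pow_le_pow_left hb _
      have h2p := aux_pow m
      have heq : (2 : ℕ) ^ (d - 2) = 2 ^ (m + 3) := by congr 1; omega
      omega
    interval_cases d
    · -- two digits
      have hq0 : 0 < P / b := Nat.div_pos hP (by omega)
      have h1 : Nat.digits b P = P % b :: Nat.digits b (P / b) := Nat.digits_def' hb1 hP0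
      have hlen1 : (Nat.digits b (P / b)).length = 1 := by
        rw [h1] at hd; simpa using hd
      have h2 : Nat.digits b (P / b) = P / b % b :: Nat.digits b (P / b / b) :=
        Nat.digits_def' hb1 hq0
      have h3 : Nat.digits b (P / b / b) = [] := by
        rw [h2] at hlen1; simpa using hlen1
      have h4 : P / b / b = 0 := Nat.digits_eq_nil_iff_eq_zero.mp h3
      have h5 : P / b < b := by
        by_contra hc
        push_neg at hc
        have := Nat.div_pos hc (show 0 < b by omega)
        omega
      have h6 : P / b % b = P / b := Nat.mod_eq_of_lt h5
      have hdig : Nat.digits b P = [P % b, P / b] := by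
        rw [h1, h2, h3, h6]
      have hrev2 := hpal.reverse_eq
      rw [hdig] at hrev2
      simp at hrev2
      -- hrev2 : P % b = P / b (in some form)
      have hqc : P / b = P % b := hrev2.1
      have hdm : b * (P / b) + P % b = P := Nat.div_add_mod P b
      have hdm' : b * (P % b) + P % b = P := by rw [hqc] at hdm; exact hdm
      have hc1 : 0 < P % b := hqc ▸ hq0
      have hcb : P % b < b := Nat.mod_lt P (by omega)
      have hc2 : P % b ≤ 2 := by
        by_contra hc
        push_neg at hc
        have h3c : 3 ≤ P % b := hc
        have hmul := Nat.mul_le_mul_left b h3c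
        omega
      have hcases : P % b = 1 ∨ P % b = 2 := by omega
      rcases hcases with hcv | hcv
      · -- c = 1 : P = b + 1
        rw [hcv] at hdm'
        have hPeq : P = b * 1 + 1 := hdm'.symm
        rcases Nat.lt_or_ge b 3 with hbs | hbl
        · have hb2 : b = 2 := by omega
          subst hb2
          rw [hPeq]
          norm_num [sumDigits]
        · rw [hPeq]
          have e1 : (b * 1 + 1) ^ 2 = b * (b + 2) + 1 := by ring
          rw [e1, sumDigits_mul_add hb1 (by omega)]
          have e2 : b + 2 = b * 1 + 2 := by ring
          rw [e2, sumDigits_mul_add hb1 (by omega), sumDigits_lt_base hb1 (by omega : 1 < b)]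
          omega
      · -- c = 2 : P = 2b + 2
        rw [hcv] at hdm' hcb
        have hPeq : P = b * 2 + 2 := hdm'.symm
        rcases Nat.lt_or_ge b 9 with hbs | hbl
        · rw [hPeq]
          interval_cases b <;> norm_num [sumDigits]
        · rw [hPeq]
          have e1 : (b * 2 + 2) ^ 2 = b * (4 * b + 8) + 4 := by ring
          rw [e1, sumDigits_mul_add hb1 (by omega)]
          have e2 : 4 * b + 8 = b * 4 + 8 := by ring
          rw [e2, sumDigits_mul_add hb1 (by omega), sumDigits_lt_base hb1 (by omega : 4 < b)]
          omega
    · -- three digits: b < 4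
      have hb4 : b < 4 := by
        have hp1 : b ^ 1 = b := pow_one b
        have := hsmall
        simp only [show (3:ℕ) - 2 = 1 from rfl, hp1] at this
        omega
      interval_cases b
      · have h1 : 4 ≤ P := by simpa using hPow
        have h2 : P < 8 := by omega
        interval_cases P <;> norm_num [sumDigits]
      · have h1 : 9 ≤ P := by simpa using hPow
        have h2 : P < 12 := by omega
        interval_cases P <;> norm_num [sumDigits]
    · -- four digits: b = 2
      have hb2 : b < 3 := by
        have h1 : b ^ 2 < 5 := by simpa using hsmall
        nlinarith
      interval_cases b
      have h1 : 8 ≤ P := by simpa using hPow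
      have h2 : P < 10 := by omega
      interval_cases P <;> norm_num [sumDigits]
  -- Step 2: construct A
  have hrev : revDigits b P = P := by
    unfold revDigits
    rw [hpal.reverse_eq, Nat.ofDigits_digits]
  refine ⟨P - sumDigits b (P ^ 2), ?_⟩
  have hA : P - sumDigits b (P ^ 2) + sumDigits b (P ^ 2) = P := by omega
  rw [hA, hrev]
  ring
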